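/- Let 𝒫 be a nontrivial 𝒜-labelled open partition of 𝕋. Then the trajectory map 𝒫_σ : 𝕋̃(𝒫) → 𝒜^{ℤ^D} is continuous with respect to both the Cantor metric d_C and the Besicovitch pseudometric d_B on 𝒜^{ℤ^D}: (a) for every finite 𝕄 ⊆ ℤ^D and every t ∈ 𝕋̃(𝒫) there is an open neighbourhood U of t such that 𝒫_σ(t')_m = 𝒫_σ(t)_m for all m ∈ 𝕄 whenever t' ∈ U ∩ 𝕋̃(𝒫); and (b) for every ε > 0 there is δ > 0 such that for all t, t' ∈ 𝕋̃(𝒫) with d(t,t') ≤ δ one has d_B(𝒫_σ(t), 𝒫_σ(t')) ≤ ε. -/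

import Mathlib

open MeasureTheory Filter Topology
open scoped ENNReal

noncomputable section

/-- The `K`-dimensional torus `𝕋 = (ℝ/ℤ)^K`, with its (sup) quotient metric `d`
and Haar (Lebesgue) probability measure `volume`. -/
abbrev Torus (K : ℕ) := Fin K → AddCircle (1 : ℝ)

/-- The lattice `𝕃 = ℤ^D`. -/
abbrev Zd (D : ℕ) := Fin D → ℤ

/-- The box `𝔹(N) = {-N,…,N-1}^D ⊆ ℤ^D`. -/
def box (D N : ℕ) : Finset (Zd D) :=
  Fintype.piFinset fun _ => Finset.Ico (-(N : ℤ)) (N : ℤ)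

open Classical in
/-- `#(J ∩ 𝔹(N)) / (2N)^D`. -/
def densSeq (D : ℕ) (J : Set (Zd D)) (N : ℕ) : ℝ :=
  ((box D N).filter (fun ℓ => ℓ ∈ J)).card / ((2 * N : ℕ) : ℝ) ^ D

/-- The upper Cesàro density `d̄(J)` of `J ⊆ ℤ^D`. -/
def upperDens (D : ℕ) (J : Set (Zd D)) : ℝ :=
  Filter.limsup (densSeq D J) Filter.atTop

/-- The Besicovitch pseudometric `d_B` on `𝒜^{ℤ^D}`. -/
def dB {A : Type*} (D : ℕ) (p q : Zd D → A) : ℝ :=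
  upperDens D {ℓ | p ℓ ≠ q ℓ}

variable {K D : ℕ} {A : Type*}

/-- An `𝒜`-labelled measurable partition of the torus: pairwise disjoint measurable
cells whose union has full measure. -/
structure IsMeasPartition (P : A → Set (Torus K)) : Prop where
  meas : ∀ a, MeasurableSet (P a)
  disj : Pairwise (Function.onFun Disjoint P)
  full : volume (⋃ a, P a) = 1

/-- An `𝒜`-labelled open partition of the torus: pairwise disjoint open cells whose
union is dense and has full measure. -/
structure IsOpenPartition (P : A → Set (Torus K)) : Prop where
  isOpen : ∀ a, IsOpen (P a)
  disj : Pairwise (Function.onFun Disjoint P)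
  dense : Dense (⋃ a, P a)
  full : volume (⋃ a, P a) = 1

/-- `lab` realizes the partition `P` as an `𝒜`-valued function (each cell is labelled
by its index). -/
def IsLabel (P : A → Set (Torus K)) (lab : Torus K → A) : Prop :=
  ∀ a, ∀ t ∈ P a, lab t = a

/-- The symmetric-difference pseudometric `d_△(𝒫,𝒬) = Σ_a λ(P_a △ Q_a)`. -/
def dSym [Fintype A] (P Q : A → Set (Torus K)) : ℝ :=
  ∑ a, (volume (symmDiff (P a) (Q a))).toReal

/-- `𝕋̃(𝒫) = ⋂_ℓ σ^ℓ(P_*)`, where `σ^ℓ(t) = t + τ(ℓ)` and `P_* = ⋃_a P_a`. -/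
def Ttil (τ : Zd D →+ Torus K) (P : A → Set (Torus K)) : Set (Torus K) :=
  ⋂ ℓ : Zd D, (fun x => x + τ ℓ) '' (⋃ a, P a)

/-- The trajectory map `𝒫_σ(t)_ℓ = 𝒫(σ^ℓ t)`, expressed via a labelling `lab` of `𝒫`. -/
def traj (τ : Zd D →+ Torus K) (lab : Torus K → A) (t : Torus K) : Zd D → A :=
  fun ℓ => lab (t + τ ℓ)

/-- A partition is simple if `0` is its only translational symmetry. -/
def IsSimple (P : A → Set (Torus K)) : Prop :=
  ∀ s : Torus K, (∀ a, volume (symmDiff (P a) ((fun x => x + s) '' P a)) = 0) → s = 0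

/-- The cellular automaton `Φ` with neighbourhood `B` and local rule `φ`:
`Φ(x)_ℓ = φ((x_{ℓ+b})_{b∈B})`. -/
def caMap {D : ℕ} {A : Type*} (B : Finset (Zd D)) (φ : (B → A) → A)
    (x : Zd D → A) : Zd D → A :=
  fun ℓ => φ fun b => x (ℓ + (b : Zd D))

/-- The induced map `Φ̂` on partitions: `Q_a = ⋃_{c : φ(c)=a} ⋂_{b∈B} σ^{-b}(P_{c_b})`. -/
def inducedPart (τ : Zd D →+ Torus K) (B : Finset (Zd D)) (φ : (B → A) → A)
    (P : A → Set (Torus K)) : A → Set (Torus K) :=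
  fun a => ⋃ (c : B → A) (_ : φ c = a), ⋂ b : B, {t | t + τ (b : Zd D) ∈ P (c b)}

/-- `x ∈ QS_σ`: `x` is a `σ`-quasisturmian sequence, i.e. the `𝒫`-trajectory of some
point of `𝕋̃(𝒫)` for some open partition `𝒫`. -/
def IsQSSeq (τ : Zd D →+ Torus K) (x : Zd D → A) : Prop :=
  ∃ (P : A → Set (Torus K)) (lab : Torus K → A) (t : Torus K),
    IsOpenPartition P ∧ IsLabel P lab ∧ t ∈ Ttil τ P ∧ x = traj τ lab t

namespace TrajAux
open Metric Set

instance : IsProbabilityMeasure (volume : Measure (AddCircle (1:ℝ))) :=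
  ⟨by rw [AddCircle.measure_univ]; simp⟩

variable {K D : ℕ}

/-- characters of the torus -/
def tchar (k : Fin K → ℤ) : C(Torus K, ℂ) :=
  ⟨fun t => ∏ i, fourier (k i) (t i), by
    apply continuous_finset_prod
    exact fun i _ => (map_continuous (fourier (k i))).comp (continuous_apply i)⟩

lemma tchar_apply (k : Fin K → ℤ) (x : Torus K) :
    tchar k x = ∏ i, fourier (k i) (x i) := rfl

lemma norm_fourier (n : ℤ) (x : AddCircle (1:ℝ)) : ‖(fourier n x : ℂ)‖ = 1 := by
  rw [fourier_apply]; exact Circle.norm_coe _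

lemma norm_tchar (k : Fin K → ℤ) (x : Torus K) : ‖tchar k x‖ = 1 := by
  rw [tchar_apply, norm_prod]
  simp [norm_fourier, Circle.norm_coe]

lemma fourier_add_arg (n : ℤ) (x y : AddCircle (1:ℝ)) :
    fourier n (x + y) = fourier n x * fourier n y := by
  simp only [fourier_apply, smul_add, AddCircle.toCircle_add, Circle.coe_mul]

lemma fourier_zero_arg (n : ℤ) : fourier n (0 : AddCircle (1:ℝ)) = 1 := by
  rw [fourier_apply]; simp

/-- `tchar k` as an additive character. -/
def achar (k : Fin K → ℤ) : AddChar (Torus K) ℂ where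
  toFun := tchar k
  map_zero_eq_one' := by simp [tchar_apply, fourier_zero_arg]
  map_add_eq_mul' := by
    intro x y
    simp only [tchar_apply, Pi.add_apply, fourier_add_arg, Finset.prod_mul_distrib]

lemma achar_apply (k : Fin K → ℤ) (x : Torus K) : achar k x = tchar k x := rfl

lemma tchar_add_arg (k : Fin K → ℤ) (x y : Torus K) :
    tchar k (x + y) = tchar k x * tchar k y := (achar k).map_add_eq_mul x y

lemma tchar_zsmul (k : Fin K → ℤ) (n : ℤ) (x : Torus K) :
    tchar k (n • x) = tchar k x ^ n := (achar k).map_zsmul_eq_zpow n x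

lemma tau_eq_sum (τ : Zd D →+ Torus K) (ℓ : Zd D) :
    τ ℓ = ∑ j, (ℓ j) • τ (Pi.single j 1) := by
  have h : ℓ = ∑ j, Pi.single j (ℓ j) := (Finset.univ_sum_single ℓ).symm
  calc τ ℓ = τ (∑ j, Pi.single j (ℓ j)) := by rw [← h]
    _ = ∑ j, τ (Pi.single j (ℓ j)) := map_sum τ _ _
    _ = ∑ j, (ℓ j) • τ (Pi.single j 1) := by
        refine Finset.sum_congr rfl fun j _ => ?_
        rw [← map_zsmul τ]
        congr 1
        ext i
        by_cases hij : i = j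
        · subst hij; simp
        · simp [Pi.single_apply, hij]

lemma tchar_tau (k : Fin K → ℤ) (τ : Zd D →+ Torus K) (ℓ : Zd D) :
    tchar k (τ ℓ) = ∏ j, (tchar k (τ (Pi.single j 1))) ^ (ℓ j) := by
  rw [tau_eq_sum τ ℓ]
  rw [show (tchar k (∑ j, (ℓ j) • τ (Pi.single j 1))) =
      ∏ j, tchar k ((ℓ j) • τ (Pi.single j 1)) from ?_]
  · exact Finset.prod_congr rfl fun j _ => tchar_zsmul _ _ _
  · induction (Finset.univ : Finset (Fin D)) using Finset.cons_induction with
    | empty => simpa using (by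
        have : tchar k (0 : Torus K) = 1 := by
          have := tchar_zsmul k 0 0; simpa using this
        simpa using this)
    | cons j s hj ih =>
        rw [Finset.sum_cons, Finset.prod_cons, tchar_add_arg, ih]

lemma sum_box_tchar (k : Fin K → ℤ) (τ : Zd D →+ Torus K) (t : Torus K) (N : ℕ) :
    ∑ ℓ ∈ box D N, tchar k (t + τ ℓ)
      = tchar k t * ∏ j, ∑ n ∈ Finset.Ico (-(N:ℤ)) (N:ℤ), (tchar k (τ (Pi.single j 1))) ^ n := by
  rw [Finset.prod_univ_sum, Finset.mul_sum]
  exact Finset.sum_congr rfl fun ℓ _ => by rw [tchar_add_arg, tchar_tau]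

lemma exists_tchar_ne_one {k : Fin K → ℤ} (hk : k ≠ 0) : ∃ x : Torus K, tchar k x ≠ 1 := by
  obtain ⟨i₀, hi₀⟩ : ∃ i, k i ≠ 0 := by
    by_contra h; push_neg at h; exact hk (funext h)
  refine ⟨Pi.single i₀ ((((1:ℝ) / 2 / (k i₀ : ℝ)) : ℝ) : AddCircle (1:ℝ)), ?_⟩
  rw [tchar_apply]
  rw [Finset.prod_eq_single i₀ (fun i _ hi => by
      simp [Pi.single_apply, hi, fourier_zero_arg]) (by simp)]
  rw [Pi.single_apply, if_pos rfl]
  have := fourier_add_half_inv_index (T := 1) hi₀ one_pos 0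
  rw [zero_add, fourier_zero_arg] at this
  rw [this]
  norm_num

lemma exists_gen_ne_one {k : Fin K → ℤ} (hk : k ≠ 0) (τ : Zd D →+ Torus K)
    (hdense : DenseRange τ) : ∃ j, tchar k (τ (Pi.single j 1)) ≠ 1 := by
  by_contra h
  push_neg at h
  have hall : ∀ ℓ : Zd D, tchar k (τ ℓ) = 1 := fun ℓ => by
    rw [tchar_tau]; simp [h]
  have hclosed : IsClosed {x : Torus K | tchar k x = 1} :=
    isClosed_eq (map_continuous (tchar k)) continuous_const
  have : ∀ x : Torus K, tchar k x = 1 := by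
    intro x
    have hsub : Set.range τ ⊆ {x : Torus K | tchar k x = 1} := by
      rintro _ ⟨ℓ, rfl⟩; exact hall ℓ
    have := hclosed.closure_subset_iff.mpr hsub
    exact this (by rw [hdense.closure_range]; trivial)
  obtain ⟨x, hx⟩ := exists_tchar_ne_one hk
  exact hx (this x)

lemma integral_tchar {k : Fin K → ℤ} (hk : k ≠ 0) :
    ∫ x : Torus K, tchar k x = 0 := by
  obtain ⟨x₀, hx₀⟩ := exists_tchar_ne_one hk
  have h1 : ∫ x : Torus K, tchar k (x + x₀) = ∫ x : Torus K, tchar k x :=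
    integral_add_right_eq_self (fun x => tchar k x) x₀
  have h2 : ∫ x : Torus K, tchar k (x + x₀)
      = (∫ x : Torus K, tchar k x) * tchar k x₀ := by
    simp_rw [tchar_add_arg]
    rw [integral_mul_const]
  have := h1.symm.trans h2
  have h3 : (∫ x : Torus K, tchar k x) * (tchar k x₀ - 1) = 0 := by
    rw [mul_sub, mul_one, ← this, sub_self]
  rcases mul_eq_zero.mp h3 with h | h
  · exact h
  · exact absurd (by linear_combination h) hx₀

lemma norm_zpow_sum_le {c : ℂ} (hc1 : ‖c‖ = 1) (hc : c ≠ 1) (N : ℕ) :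
    ‖∑ n ∈ Finset.Ico (-(N:ℤ)) (N:ℤ), c ^ n‖ ≤ 2 / ‖1 - c‖ := by
  have hc0 : c ≠ 0 := by intro h; rw [h] at hc1; simp at hc1
  have himg : Finset.Ico (-(N:ℤ)) (N:ℤ)
      = (Finset.range (2*N)).image (fun m : ℕ => (m:ℤ) - N) := by
    ext n
    simp only [Finset.mem_Ico, Finset.mem_image, Finset.mem_range]
    constructor
    · intro ⟨h1, h2⟩; exact ⟨(n + N).toNat, by omega, by omega⟩
    · rintro ⟨m, hm, rfl⟩; omega
  rw [himg, Finset.sum_image (by intro a _ b _ h; exact_mod_cast (sub_left_inj.mp h))]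
  have heach : ∀ m : ℕ, c ^ ((m:ℤ) - N) = c ^ m / c ^ N := by
    intro m
    rw [zpow_sub₀ hc0, zpow_natCast, zpow_natCast]
  simp_rw [heach]
  rw [← Finset.sum_div, geom_sum_eq hc]
  rw [norm_div, norm_div]
  have hcN : ‖c ^ N‖ = 1 := by rw [norm_pow, hc1, one_pow]
  have hc2N : ‖c ^ (2*N)‖ = 1 := by rw [norm_pow, hc1, one_pow]
  rw [hcN, div_one]
  have hnum : ‖c ^ (2*N) - 1‖ ≤ 2 := by
    calc ‖c ^ (2*N) - 1‖ ≤ ‖c ^ (2*N)‖ + ‖(1:ℂ)‖ := norm_sub_le _ _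
      _ = 2 := by rw [hc2N]; norm_num
  rw [show ‖c - 1‖ = ‖1 - c‖ from norm_sub_rev _ _]
  have hpos : 0 < ‖1 - c‖ := by
    rw [norm_pos_iff, sub_ne_zero]; exact fun h => hc h.symm
  gcongr

lemma card_box (D N : ℕ) : (box D N).card = (2*N)^D := by
  rw [box, Fintype.card_piFinset]
  simp only [Int.card_Ico]
  rw [Finset.prod_const, Finset.card_univ, Fintype.card_fin]
  congr 1
  omega

/-- Cesàro averages over boxes. -/
def cavg (τ : Zd D →+ Torus K) (t : Torus K) (g : Torus K → ℂ) (N : ℕ) : ℂ :=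
  (∑ ℓ ∈ box D N, g (t + τ ℓ)) / ((2 * N : ℕ) : ℂ) ^ D

lemma tendsto_cavg_tchar (hD : 1 ≤ D) (τ : Zd D →+ Torus K) (hdense : DenseRange τ)
    (k : Fin K → ℤ) (t : Torus K) :
    Tendsto (cavg τ t (tchar k)) atTop (𝓝 (∫ x : Torus K, tchar k x)) := by
  rcases eq_or_ne k 0 with rfl | hk
  · -- k = 0 : the character is 1
    have hone : ∀ x : Torus K, tchar (0 : Fin K → ℤ) x = 1 := fun x => by
      rw [tchar_apply]; simp [fourier_zero_arg]
    have hint : ∫ x : Torus K, tchar (0 : Fin K → ℤ) x = 1 := by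
      simp_rw [hone]; simp
    rw [hint]
    have hev : ∀ᶠ N in atTop, cavg τ t (tchar 0) N = 1 := by
      filter_upwards [eventually_ge_atTop 1] with N hN
      unfold cavg
      simp_rw [hone]
      rw [Finset.sum_const, card_box]
      have h0 : ((2*N : ℕ) : ℂ) ^ D ≠ 0 := by
        apply pow_ne_zero
        simp; omega
      rw [nsmul_eq_mul, mul_one]
      rw [show (((2*N)^D : ℕ) : ℂ) = ((2*N : ℕ) : ℂ) ^ D by push_cast; ring]
      exact div_self h0
    exact Tendsto.congr' (by filter_upwards [hev] with N h using h.symm) tendsto_const_nhds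
  · rw [integral_tchar hk]
    obtain ⟨j₀, hj₀⟩ := exists_gen_ne_one hk τ hdense
    set c := tchar k (τ (Pi.single j₀ 1)) with hc
    have hnc : ‖c‖ = 1 := norm_tchar _ _
    have hpos : (0:ℝ) < 2 / ‖1 - c‖ := by
      apply div_pos two_pos
      rw [norm_pos_iff, sub_ne_zero]; exact fun h => hj₀ h.symm
    refine squeeze_zero_norm' (f := cavg τ t (⇑(tchar k))) (a := fun N => (2 / ‖1 - c‖) / (2 * (N:ℝ))) ?_ ?_
    · filter_upwards [eventually_ge_atTop 1] with N hN
      unfold cavg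
      rw [sum_box_tchar, norm_div, norm_mul, norm_tchar, one_mul, norm_prod]
      have hSj : ∀ j, ‖∑ n ∈ Finset.Ico (-(N:ℤ)) (N:ℤ),
          (tchar k (τ (Pi.single j 1))) ^ n‖ ≤ 2 * N := by
        intro j
        calc ‖∑ n ∈ Finset.Ico (-(N:ℤ)) (N:ℤ), (tchar k (τ (Pi.single j 1))) ^ n‖
            ≤ ∑ n ∈ Finset.Ico (-(N:ℤ)) (N:ℤ), ‖(tchar k (τ (Pi.single j 1))) ^ n‖ :=
              norm_sum_le _ _
          _ = ∑ n ∈ Finset.Ico (-(N:ℤ)) (N:ℤ), 1 := by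
              refine Finset.sum_congr rfl fun n _ => ?_
              rw [norm_zpow, norm_tchar, one_zpow]
          _ = ((Finset.Ico (-(N:ℤ)) (N:ℤ)).card : ℝ) := by rw [Finset.sum_const]; simp
          _ = 2 * N := by
              rw [Int.card_Ico]
              rw [show ((N:ℤ) - -(N:ℤ)).toNat = 2*N by omega]
              push_cast; ring
      have hprod : ∏ j, ‖∑ n ∈ Finset.Ico (-(N:ℤ)) (N:ℤ),
          (tchar k (τ (Pi.single j 1))) ^ n‖ ≤ (2 / ‖1 - c‖) * (2*N)^(D-1) := by
        rw [← Finset.mul_prod_erase Finset.univ _ (Finset.mem_univ j₀)]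
        have h1 : ‖∑ n ∈ Finset.Ico (-(N:ℤ)) (N:ℤ), c ^ n‖ ≤ 2 / ‖1 - c‖ :=
          norm_zpow_sum_le hnc hj₀ N
        have h2 : ∏ j ∈ Finset.univ.erase j₀, ‖∑ n ∈ Finset.Ico (-(N:ℤ)) (N:ℤ),
            (tchar k (τ (Pi.single j 1))) ^ n‖ ≤ (2*N)^(D-1) := by
          calc _ ≤ ∏ _j ∈ Finset.univ.erase j₀, ((2*N : ℕ) : ℝ) := by
                apply Finset.prod_le_prod
                · intro j _; positivity
                · intro j _; exact_mod_cast hSj j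
            _ = ((2*N:ℕ):ℝ) ^ (D-1) := by
                rw [Finset.prod_const, Finset.card_erase_of_mem (Finset.mem_univ j₀),
                  Finset.card_univ, Fintype.card_fin]
            _ = (2*N:ℝ)^(D-1) := by push_cast; ring
        calc _ ≤ (2/‖1-c‖) * ((2*N:ℝ)^(D-1)) := by
              apply mul_le_mul h1 h2 (Finset.prod_nonneg fun _ _ => norm_nonneg _)
                (le_of_lt hpos)
          _ = (2 / ‖1 - c‖) * (2*N)^(D-1) := rfl
      have hden : ‖((2 * N : ℕ) : ℂ) ^ D‖ = (2*N:ℝ)^D := by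
        rw [norm_pow]
        congr 1
        rw [show ((2 * N : ℕ) : ℂ) = ((2*N : ℝ) : ℂ) by push_cast; ring,
          Complex.norm_real, Real.norm_eq_abs, abs_of_nonneg (by positivity)]
      rw [hden]
      rw [div_le_div_iff₀ (by positivity) (by positivity)]
      calc (∏ j, ‖∑ n ∈ Finset.Ico (-(N:ℤ)) (N:ℤ),
            (tchar k (τ (Pi.single j 1))) ^ n‖) * (2 * (N:ℝ))
          ≤ ((2 / ‖1 - c‖) * (2*N)^(D-1)) * (2 * N) := by
            apply mul_le_mul_of_nonneg_right hprod (by positivity)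
        _ = (2 / ‖1 - c‖) * ((2*N:ℝ)^(D-1) * (2*N)) := by ring
        _ = (2 / ‖1 - c‖) * (2*N:ℝ)^D := by
            congr 1
            rw [← pow_succ]
            congr 1
            omega
    · have : Tendsto (fun N : ℕ => (2 * (N:ℝ))) atTop atTop := by
        apply Tendsto.const_mul_atTop two_pos
        exact tendsto_natCast_atTop_atTop
      simpa using this.const_div_atTop (2 / ‖1 - c‖)

lemma integrable_continuousMap {E : Type*} [NormedAddCommGroup E] [NormedSpace ℝ E]
    (g : C(Torus K, E)) : Integrable (fun x => g x) (volume : Measure (Torus K)) := by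
  apply g.continuous.integrable_of_hasCompactSupport
  exact IsCompact.of_isClosed_subset isCompact_univ (isClosed_tsupport _) (Set.subset_univ _)

/-- tendsto holds on the span of characters -/
lemma tendsto_cavg_span (hD : 1 ≤ D) (τ : Zd D →+ Torus K) (hdense : DenseRange τ)
    (t : Torus K) (g : C(Torus K, ℂ))
    (hg : g ∈ Submodule.span ℂ (Set.range (tchar (K := K)))) :
    Tendsto (cavg τ t g) atTop (𝓝 (∫ x : Torus K, g x)) := by
  induction hg using Submodule.span_induction with
  | mem x h => obtain ⟨k, rfl⟩ := h; exact tendsto_cavg_tchar hD τ hdense k t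
  | zero =>
      have : cavg τ t (0 : C(Torus K, ℂ)) = fun _ => 0 := by
        funext N; unfold cavg; simp
      rw [this]
      simpa using tendsto_const_nhds
  | add x y hx hy ihx ihy =>
      have hxy : cavg τ t ((x + y : C(Torus K, ℂ))) = fun N => cavg τ t x N + cavg τ t y N := by
        funext N; unfold cavg
        rw [← add_div, ← Finset.sum_add_distrib]
        rfl
      rw [hxy]
      have hint : ∫ z : Torus K, (x + y : C(Torus K, ℂ)) z
          = (∫ z : Torus K, x z) + ∫ z : Torus K, y z := by
        simp only [ContinuousMap.add_apply]
        exact integral_add (integrable_continuousMap x) (integrable_continuousMap y)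
      rw [hint]
      exact ihx.add ihy
  | smul a x hx ihx =>
      have hax : cavg τ t ((a • x : C(Torus K, ℂ))) = fun N => a * cavg τ t x N := by
        funext N; unfold cavg
        simp only [ContinuousMap.coe_smul, Pi.smul_apply, smul_eq_mul]
        rw [← Finset.mul_sum, mul_div_assoc]
      rw [hax]
      have hint : ∫ z : Torus K, (a • x : C(Torus K, ℂ)) z = a * ∫ z : Torus K, x z := by
        simp only [ContinuousMap.coe_smul, Pi.smul_apply, smul_eq_mul]
        rw [integral_const_mul]
      rw [hint]
      exact ihx.const_mul a

/-- the span of characters is dense (Stone–Weierstrass) -/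
lemma dense_span_tchar (g : C(Torus K, ℂ)) {ε : ℝ} (hε : 0 < ε) :
    ∃ h ∈ Submodule.span ℂ (Set.range (tchar (K := K))), ‖g - h‖ < ε := by
  classical
  -- the range of tchar is a submonoid closed under star
  have hmul : ∀ k k' : Fin K → ℤ, tchar (K := K) k * tchar k' = tchar (k + k') := by
    intro k k'
    ext x
    simp only [ContinuousMap.mul_apply, tchar_apply, Pi.add_apply, fourier_add,
      ← Finset.prod_mul_distrib]
  have hone : (1 : C(Torus K, ℂ)) = tchar 0 := by
    ext x; simp [tchar_apply, fourier_zero_arg]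
  have hstar : ∀ k : Fin K → ℤ, star (tchar (K := K) k) = tchar (-k) := by
    intro k
    ext x
    simp only [ContinuousMap.star_apply, tchar_apply, starRingEnd_apply, star_prod]
    refine Finset.prod_congr rfl fun i _ => ?_
    rw [Pi.neg_apply, fourier_neg]
    rfl
  set S : Set C(Torus K, ℂ) := Set.range (tchar (K := K)) with hS
  -- Stone–Weierstrass
  have hsep : (StarAlgebra.adjoin ℂ S).SeparatesPoints := by
    intro x y hxy
    obtain ⟨i, hi⟩ : ∃ i, x i ≠ y i := by
      by_contra h; push_neg at h; exact hxy (funext h)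
    refine ⟨_, ⟨tchar (Pi.single i 1), StarAlgebra.subset_adjoin (R := ℂ) S ⟨_, rfl⟩, rfl⟩, ?_⟩
    simp only [tchar_apply]
    have hx : ∀ z : Torus K, ∏ i', fourier ((Pi.single i 1 : Fin K → ℤ) i') (z i')
        = AddCircle.toCircle (z i) := by
      intro z
      rw [Finset.prod_eq_single i (fun i' _ hi' => by
        simp [Pi.single_apply, hi', fourier_zero]) (by simp)]
      simp [fourier_one]
    rw [hx, hx]
    intro h
    exact hi (AddCircle.injective_toCircle one_ne_zero (Circle.ext h))
  have htop := ContinuousMap.starSubalgebra_topologicalClosure_eq_top_of_separatesPoints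
    (StarAlgebra.adjoin ℂ S) hsep
  have hgmem : g ∈ closure ((StarAlgebra.adjoin ℂ S) : Set C(Torus K, ℂ)) := by
    have : g ∈ (StarAlgebra.adjoin ℂ S).topologicalClosure := by
      rw [htop]; trivial
    exact this
  rw [Metric.mem_closure_iff] at hgmem
  obtain ⟨h, hh, hdist⟩ := hgmem (ε) hε
  refine ⟨h, ?_, by rwa [← dist_eq_norm]⟩
  -- adjoin ⊆ span
  have hSstar : S ∪ star S = S := by
    apply Set.union_eq_self_of_subset_right
    intro x hx
    rw [Set.mem_star] at hx
    obtain ⟨k, hk⟩ := hx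
    exact ⟨-k, by rw [← hstar k, hk, star_star]⟩
  have hh' : h ∈ Algebra.adjoin ℂ S := by
    have := StarAlgebra.adjoin_toSubalgebra (R := ℂ) S
    have hmem : h ∈ (StarAlgebra.adjoin ℂ S).toSubalgebra := hh
    rw [this, hSstar] at hmem
    exact hmem
  have hspan : h ∈ Submodule.span ℂ ((Submonoid.closure S : Submonoid C(Torus K, ℂ)) : Set _) := by
    rw [← Algebra.adjoin_eq_span]
    exact hh'
  refine Submodule.span_mono ?_ hspan
  intro x hx
  -- Submonoid.closure S ⊆ S since S is multiplicatively closed and contains 1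
  have : (Submonoid.closure S : Set C(Torus K, ℂ)) ⊆ S := by
    intro z hz
    induction hz using Submonoid.closure_induction with
    | mem w hw => exact hw
    | one => exact ⟨0, hone.symm⟩
    | mul w₁ w₂ h₁ h₂ ih₁ ih₂ =>
        obtain ⟨k₁, rfl⟩ := ih₁
        obtain ⟨k₂, rfl⟩ := ih₂
        exact ⟨k₁ + k₂, (hmul k₁ k₂).symm⟩
  exact this hx

/-- Unique ergodicity: Cesàro averages of continuous functions converge to the integral. -/
lemma tendsto_cavg (hD : 1 ≤ D) (τ : Zd D →+ Torus K) (hdense : DenseRange τ)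
    (t : Torus K) (g : C(Torus K, ℂ)) :
    Tendsto (cavg τ t g) atTop (𝓝 (∫ x : Torus K, g x)) := by
  rw [Metric.tendsto_atTop]
  intro ε hε
  obtain ⟨h, hmem, hnorm⟩ := dense_span_tchar g (show (0:ℝ) < ε/4 by linarith)
  have htend := tendsto_cavg_span hD τ hdense t h hmem
  rw [Metric.tendsto_atTop] at htend
  obtain ⟨N₀, hN₀⟩ := htend (ε/4) (by linarith)
  refine ⟨max N₀ 1, fun N hN => ?_⟩
  have hN1 : 1 ≤ N := le_trans (le_max_right _ _) hN
  have hNN₀ : N₀ ≤ N := le_trans (le_max_left _ _) hN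
  have hden_pos : (0:ℝ) < ((2*N : ℕ):ℝ)^D := by
    apply pow_pos; push_cast; positivity -- N ≥ 1
  -- difference of averages
  have hdiff : ‖cavg τ t g N - cavg τ t h N‖ ≤ ε/4 := by
    have : cavg τ t g N - cavg τ t h N
        = (∑ ℓ ∈ box D N, (g (t + τ ℓ) - h (t + τ ℓ))) / ((2 * N : ℕ) : ℂ) ^ D := by
      unfold cavg
      rw [← sub_div, ← Finset.sum_sub_distrib]
    rw [this, norm_div]
    have hnum : ‖∑ ℓ ∈ box D N, (g (t + τ ℓ) - h (t + τ ℓ))‖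
        ≤ (box D N).card * ‖g - h‖ := by
      calc ‖∑ ℓ ∈ box D N, (g (t + τ ℓ) - h (t + τ ℓ))‖
          ≤ ∑ ℓ ∈ box D N, ‖g (t + τ ℓ) - h (t + τ ℓ)‖ := norm_sum_le _ _
        _ ≤ ∑ _ℓ ∈ box D N, ‖g - h‖ := by
            apply Finset.sum_le_sum
            intro ℓ _
            exact (g - h).norm_coe_le_norm (t + τ ℓ)
        _ = (box D N).card * ‖g - h‖ := by rw [Finset.sum_const, nsmul_eq_mul]
    have hdenn : ‖((2 * N : ℕ) : ℂ) ^ D‖ = ((2*N:ℕ):ℝ)^D := by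
      rw [norm_pow, Complex.norm_natCast]
    rw [hdenn]
    have hcard : ((box D N).card : ℝ) = ((2*N:ℕ):ℝ)^D := by
      rw [card_box]; push_cast; ring
    calc ‖∑ ℓ ∈ box D N, (g (t + τ ℓ) - h (t + τ ℓ))‖ / ((2*N:ℕ):ℝ)^D
        ≤ ((box D N).card * ‖g - h‖) / ((2*N:ℕ):ℝ)^D := by gcongr
      _ = ‖g - h‖ := by rw [hcard]; field_simp
      _ ≤ ε/4 := le_of_lt hnorm
  have hint : ‖(∫ x : Torus K, h x) - ∫ x : Torus K, g x‖ ≤ ε/4 := by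
    have : (∫ x : Torus K, h x) - ∫ x : Torus K, g x = ∫ x : Torus K, (h - g) x := by
      simp only [ContinuousMap.sub_apply]
      rw [integral_sub (integrable_continuousMap h) (integrable_continuousMap g)]
    rw [this]
    calc ‖∫ x : Torus K, (h - g) x‖ ≤ ‖h - g‖ * (volume (Set.univ : Set (Torus K))).toReal :=
          norm_integral_le_of_norm_le_const
            (Eventually.of_forall fun x => (h - g).norm_coe_le_norm x)
      _ = ‖h - g‖ := by simp
      _ = ‖g - h‖ := norm_sub_rev _ _
      _ ≤ ε/4 := le_of_lt hnorm
  have h2 := hN₀ N hNN₀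
  rw [dist_eq_norm] at h2 ⊢
  calc ‖cavg τ t g N - ∫ x : Torus K, g x‖
      ≤ ‖cavg τ t g N - cavg τ t h N‖ + ‖cavg τ t h N - ∫ x : Torus K, h x‖
        + ‖(∫ x : Torus K, h x) - ∫ x : Torus K, g x‖ := by
        have := dist_triangle4 (cavg τ t g N) (cavg τ t h N) (∫ x : Torus K, h x)
          (∫ x : Torus K, g x)
        simpa [dist_eq_norm] using this
    _ < ε := by linarith [h2]

/-- real version -/
lemma tendsto_ravg (hD : 1 ≤ D) (τ : Zd D →+ Torus K) (hdense : DenseRange τ)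
    (t : Torus K) (g : C(Torus K, ℝ)) :
    Tendsto (fun N => (∑ ℓ ∈ box D N, g (t + τ ℓ)) / ((2 * N : ℕ) : ℝ) ^ D) atTop
      (𝓝 (∫ x : Torus K, g x)) := by
  set gc : C(Torus K, ℂ) := ⟨fun x => (g x : ℂ), Complex.continuous_ofReal.comp g.continuous⟩
    with hgc
  have hre : ∀ N, (∑ ℓ ∈ box D N, g (t + τ ℓ)) / ((2 * N : ℕ) : ℝ) ^ D
      = (cavg τ t gc N).re := by
    intro N
    unfold cavg
    rw [show (∑ ℓ ∈ box D N, gc (t + τ ℓ)) = ((∑ ℓ ∈ box D N, g (t + τ ℓ) : ℝ) : ℂ) by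
      push_cast; rfl]
    rw [show (((2 * N : ℕ) : ℂ)) ^ D = (((((2*N:ℕ)) : ℝ) : ℂ)) ^ D by push_cast; ring]
    rw [← Complex.ofReal_pow, ← Complex.ofReal_div, Complex.ofReal_re]
  have hint : ∫ x : Torus K, gc x = ((∫ x : Torus K, g x : ℝ) : ℂ) := by
    exact integral_ofReal
  have := (Complex.continuous_re.tendsto _).comp (tendsto_cavg hD τ hdense t gc)
  rw [hint] at this
  simp only [Complex.ofReal_re] at this
  apply Tendsto.congr _ this
  intro N
  rw [hre N]
  rfl


lemma card_filter_le_sum {α : Type*} (s : Finset α) (p : α → Prop) [DecidablePred p]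
    (g : α → ℝ) (h1 : ∀ ℓ ∈ s, p ℓ → 1 ≤ g ℓ) (h0 : ∀ ℓ ∈ s, 0 ≤ g ℓ) :
    ((s.filter p).card : ℝ) ≤ ∑ ℓ ∈ s, g ℓ := by
  calc ((s.filter p).card : ℝ) = ∑ _ℓ ∈ s.filter p, (1:ℝ) := by
        rw [Finset.sum_const, nsmul_eq_mul, mul_one]
    _ ≤ ∑ ℓ ∈ s.filter p, g ℓ := Finset.sum_le_sum fun ℓ hℓ =>
        h1 ℓ (Finset.mem_filter.mp hℓ).1 (Finset.mem_filter.mp hℓ).2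
    _ ≤ ∑ ℓ ∈ s, g ℓ := Finset.sum_le_sum_of_subset_of_nonneg (Finset.filter_subset _ _)
        (fun ℓ hℓ _ => h0 ℓ hℓ)

end TrajAux

/-- For a nontrivial open partition `𝒫`, the trajectory map
`𝒫_σ : 𝕋̃(𝒫) → 𝒜^{ℤ^D}` is continuous both for the Cantor metric (a) and for the
Besicovitch pseudometric (b). -/
theorem traj_continuous {K D : ℕ} (hK : 1 ≤ K) (hD : 1 ≤ D) {A : Type*} [Fintype A]
    (τ : Zd D →+ Torus K) (hinj : Function.Injective τ) (hdense : DenseRange τ)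
    (P : A → Set (Torus K)) (hP : IsOpenPartition P)
    (hnontriv : ∃ a b : A, a ≠ b ∧ (P a).Nonempty ∧ (P b).Nonempty)
    (lab : Torus K → A) (hlab : IsLabel P lab) :
    ((∀ M : Finset (Zd D), ∀ t ∈ Ttil τ P, ∃ U : Set (Torus K), IsOpen U ∧ t ∈ U ∧
        ∀ t' ∈ U ∩ Ttil τ P, ∀ m ∈ M, traj τ lab t' m = traj τ lab t m) ∧
      (∀ ε : ℝ, 0 < ε → ∃ δ : ℝ, 0 < δ ∧ ∀ t ∈ Ttil τ P, ∀ t' ∈ Ttil τ P,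
        dist t t' ≤ δ → dB D (traj τ lab t) (traj τ lab t') ≤ ε)) := by
  classical
  have hmemT : ∀ t ∈ Ttil τ P, ∀ ℓ : Zd D, ∃ a, t + τ ℓ ∈ P a := by
    intro t ht ℓ
    have h := Set.mem_iInter.mp ht (-ℓ)
    obtain ⟨x, hx, hxe⟩ := h
    have hxe' : x + -τ ℓ = t := by rw [map_neg] at hxe; exact hxe
    have hxs : x - τ ℓ = t := by rw [sub_eq_add_neg]; exact hxe'
    have hxt : x = t + τ ℓ := by rw [← hxs]; abel
    rw [hxt] at hx
    exact Set.mem_iUnion.mp hx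
  constructor
  · -- (a) Cantor continuity
    intro M t ht
    choose f hf using hmemT t ht
    refine ⟨⋂ m ∈ M, (fun x => x + τ m) ⁻¹' (P (f m)), ?_, ?_, ?_⟩
    · exact isOpen_biInter_finset fun m _ =>
        (hP.isOpen (f m)).preimage (continuous_id.add continuous_const)
    · exact Set.mem_biInter fun m _ => hf m
    · rintro t' ⟨hU, _⟩ m hm
      have h1 : t' + τ m ∈ P (f m) := Set.mem_iInter₂.mp hU m hm
      show lab (t' + τ m) = lab (t + τ m)
      rw [hlab (f m) _ h1, hlab (f m) _ (hf m)]
  · -- (b) Besicovitch continuity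
    intro ε hε
    have hA : Nonempty A := ⟨hnontriv.choose⟩
    set nA : ℕ := Fintype.card A with hnA_def
    have hnA : 0 < nA := Fintype.card_pos
    have hεnA : 0 < ε / (4 * nA) := by positivity
    set e : ℝ≥0∞ := ENNReal.ofReal (ε / (4 * nA)) with he_def
    have he : e ≠ 0 := by
      simp only [he_def, ne_eq, ENNReal.ofReal_eq_zero, not_le]
      exact hεnA
    have hcpt : ∀ a, ∃ Ka, Ka ⊆ P a ∧ IsCompact Ka ∧ volume (P a) < volume Ka + e := by
      intro a
      obtain ⟨Ka, h1, h2, h3⟩ := (hP.isOpen a).measurableSet.exists_isCompact_lt_add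
        (measure_ne_top volume (P a)) he
      exact ⟨Ka, h1, h2, h3⟩
    choose Ka hKsub hKcpt hKlt using hcpt
    have hdel : ∀ a, ∃ δ, 0 < δ ∧ Metric.thickening δ (Ka a) ⊆ P a := fun a =>
      (hKcpt a).exists_thickening_subset_open (hP.isOpen a) (hKsub a)
    choose δa hδa hδsub using hdel
    set δ : ℝ := (Finset.univ.inf' Finset.univ_nonempty δa) / 2 with hδ_def
    have hinfpos : 0 < Finset.univ.inf' Finset.univ_nonempty δa := by
      rw [Finset.lt_inf'_iff]
      exact fun a _ => hδa a
    have hδpos : 0 < δ := by positivity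
    have hδlt : ∀ a, δ < δa a := by
      intro a
      calc δ < Finset.univ.inf' Finset.univ_nonempty δa := half_lt_self hinfpos
        _ ≤ δa a := Finset.inf'_le δa (Finset.mem_univ a)
    refine ⟨δ, hδpos, ?_⟩
    intro t ht t' ht' hdist
    set s : Torus K := t' - t with hs_def
    have hs : ‖s‖ ≤ δ := by
      rw [hs_def, ← dist_eq_norm, dist_comm]
      exact hdist
    have hshift : ∀ a, ∀ x ∈ Ka a, x + s ∈ P a := by
      intro a x hx
      apply hδsub a
      rw [Metric.mem_thickening_iff]
      refine ⟨x, hx, ?_⟩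
      rw [show dist (x + s) x = ‖s‖ by rw [dist_eq_norm]; congr 1; abel]
      exact lt_of_le_of_lt hs (hδlt a)
    set W : Set (Torus K) := ⋃ a, (P a ∩ (fun x => x + s) ⁻¹' (P a)) with hW_def
    have hWopen : IsOpen W := isOpen_iUnion fun a =>
      (hP.isOpen a).inter ((hP.isOpen a).preimage (continuous_id.add continuous_const))
    set Kc : Set (Torus K) := ⋃ a, Ka a with hKc_def
    have hKcW : Kc ⊆ W :=
      Set.iUnion_mono fun a => Set.subset_inter (hKsub a) (fun x hx => hshift a x hx)
    have hKc_cpt : IsCompact Kc := isCompact_iUnion fun a => hKcpt a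
    obtain ⟨f, hf0, hf1, hf01⟩ := exists_continuous_zero_one_of_isCompact
      (hWopen.isClosed_compl.isCompact) hKc_cpt.isClosed
      (Set.disjoint_compl_left_iff_subset.mpr hKcW)
    -- labels agree where the orbit lies in W
    have hlabel : ∀ ℓ : Zd D, t + τ ℓ ∈ W →
        traj τ lab t ℓ = traj τ lab t' ℓ := by
      intro ℓ hℓ
      obtain ⟨a, ha⟩ := Set.mem_iUnion.mp hℓ
      have h1 : t + τ ℓ ∈ P a := ha.1
      have h2 : (t + τ ℓ) + s ∈ P a := ha.2
      have h3 : t' + τ ℓ = (t + τ ℓ) + s := by rw [hs_def]; abel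
      show lab (t + τ ℓ) = lab (t' + τ ℓ)
      rw [h3, hlab a _ h1, hlab a _ h2]
    set g : C(Torus K, ℝ) := (1 : C(Torus K, ℝ)) - f with hg_def
    have hg_nonneg : ∀ x, 0 ≤ g x := by
      intro x
      simp only [hg_def, ContinuousMap.sub_apply, ContinuousMap.one_apply]
      linarith [(hf01 x).2]
    have hg_one : ∀ ℓ : Zd D, traj τ lab t ℓ ≠ traj τ lab t' ℓ → g (t + τ ℓ) = 1 := by
      intro ℓ hℓ
      have hc : t + τ ℓ ∈ Wᶜ := fun hmem => hℓ (hlabel ℓ hmem)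
      simp only [hg_def, ContinuousMap.sub_apply, ContinuousMap.one_apply]
      rw [hf0 hc]
      simp
    -- pointwise bound for the density sequence
    set J : Set (Zd D) := {ℓ | traj τ lab t ℓ ≠ traj τ lab t' ℓ} with hJ_def
    have hbound : ∀ N, densSeq D J N
        ≤ (∑ ℓ ∈ box D N, g (t + τ ℓ)) / ((2 * N : ℕ) : ℝ) ^ D := by
      intro N
      rcases Nat.eq_zero_or_pos N with rfl | hN
      · have hz : ((2 * 0 : ℕ) : ℝ) ^ D = 0 := by
          rw [show ((2 * 0 : ℕ) : ℝ) = 0 by norm_num, zero_pow (by omega)]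
        unfold densSeq
        rw [hz, div_zero, div_zero]
      · have hden : (0:ℝ) < ((2 * N : ℕ) : ℝ) ^ D := by
          apply pow_pos; push_cast; positivity
        unfold densSeq
        gcongr
        exact @TrajAux.card_filter_le_sum _ (box D N) (fun ℓ => ℓ ∈ J)
            (fun a => Classical.propDecidable (a ∈ J))
            (fun ℓ => g (t + τ ℓ)) (fun ℓ _ hℓ => (hg_one ℓ hℓ).ge)
            (fun ℓ _ => hg_nonneg _)
    -- the averages of g converge to its integral (unique ergodicity)
    have htend := TrajAux.tendsto_ravg hD τ hdense t g
    -- lower bound for the integral of f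
    have hintf_ge : (volume Kc).toReal ≤ ∫ x : Torus K, f x := by
      have hind : ∀ x : Torus K, Set.indicator Kc (fun _ => (1:ℝ)) x ≤ f x := by
        intro x
        by_cases hx : x ∈ Kc
        · rw [Set.indicator_of_mem hx]
          have := hf1 hx
          simp only [Pi.one_apply] at this
          rw [this]
        · rw [Set.indicator_of_notMem hx]
          exact (hf01 x).1
      calc (volume Kc).toReal
          = ∫ x : Torus K, Set.indicator Kc (fun _ => (1:ℝ)) x := by
            rw [integral_indicator_const (1:ℝ) hKc_cpt.isClosed.measurableSet]
            simp
            rfl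
        _ ≤ ∫ x : Torus K, f x := integral_mono
            ((integrable_const (1:ℝ)).indicator hKc_cpt.isClosed.measurableSet)
            (TrajAux.integrable_continuousMap f) hind
    have hsum_p : ∑ a, (volume (P a)).toReal = 1 := by
      have hiu : volume (⋃ a, P a) = ∑ a, volume (P a) := by
        rw [measure_iUnion hP.disj (fun a => (hP.isOpen a).measurableSet), tsum_fintype]
      calc ∑ a, (volume (P a)).toReal = (∑ a, volume (P a)).toReal :=
            (ENNReal.toReal_sum (fun a _ => measure_ne_top _ _)).symm
        _ = 1 := by rw [← hiu, hP.full]; simp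
    have hKa_disj : Pairwise (Function.onFun Disjoint Ka) := fun a b hab =>
      (hP.disj hab).mono (hKsub a) (hKsub b)
    have hKc_meas : (volume Kc).toReal = ∑ a, (volume (Ka a)).toReal := by
      rw [hKc_def, measure_iUnion hKa_disj (fun a => (hKcpt a).isClosed.measurableSet),
        tsum_fintype]
      exact ENNReal.toReal_sum (fun a _ => measure_ne_top _ _)
    have hPa_le : ∀ a, (volume (P a)).toReal ≤ (volume (Ka a)).toReal + ε / (4 * nA) := by
      intro a
      have h1 : volume (P a) ≤ volume (Ka a) + e := (hKlt a).le
      have h2 : (volume (P a)).toReal ≤ (volume (Ka a) + e).toReal :=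
        ENNReal.toReal_mono (ENNReal.add_ne_top.mpr
          ⟨measure_ne_top _ _, ENNReal.ofReal_ne_top⟩) h1
      rwa [ENNReal.toReal_add (measure_ne_top _ _) ENNReal.ofReal_ne_top,
        ENNReal.toReal_ofReal hεnA.le] at h2
    have hKc_ge : 1 - ε/4 ≤ (volume Kc).toReal := by
      have h1 : (1:ℝ) ≤ (volume Kc).toReal + ε/4 := by
        calc (1:ℝ) = ∑ a, (volume (P a)).toReal := hsum_p.symm
          _ ≤ ∑ a, ((volume (Ka a)).toReal + ε / (4 * nA)) :=
              Finset.sum_le_sum fun a _ => hPa_le a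
          _ = (∑ a, (volume (Ka a)).toReal) + nA * (ε / (4 * nA)) := by
              rw [Finset.sum_add_distrib, Finset.sum_const, nsmul_eq_mul,
                Finset.card_univ]
          _ = (volume Kc).toReal + ε/4 := by
              rw [← hKc_meas]
              congr 1
              have : (nA:ℝ) ≠ 0 := by positivity
              field_simp
      linarith
    have hL : ∫ x : Torus K, g x ≤ ε/4 := by
      have hgi : ∫ x : Torus K, g x = 1 - ∫ x : Torus K, f x := by
        simp only [hg_def, ContinuousMap.sub_apply, ContinuousMap.one_apply]
        rw [integral_sub (integrable_const (1:ℝ)) (TrajAux.integrable_continuousMap f)]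
        congr 1
        simp
      rw [hgi]
      linarith
    have hcb : IsCoboundedUnder (· ≤ ·) atTop (densSeq D J) := by
      apply Filter.isCoboundedUnder_le_of_le atTop (x := 0)
      intro N
      unfold densSeq
      exact div_nonneg (Nat.cast_nonneg _) (pow_nonneg (Nat.cast_nonneg _) _)
    have hlim := Filter.limsup_le_limsup (Eventually.of_forall hbound) hcb
      htend.isBoundedUnder_le
    rw [htend.limsup_eq] at hlim
    unfold dB upperDens
    rw [← hJ_def]
    exact le_trans hlim (by linarith)

end
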